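/- For every value E* with 0 < E* < 2/√(2π), there exists a unique real number β_S > 0 such that F(β_S) = E*, where F(b) = φ(b)/Φ(−b) − b. -/

import Mathlib

open MeasureTheory Filter

/-- Standard normal density. -/
noncomputable def phi (x : ℝ) : ℝ := Real.exp (-x ^ 2 / 2) / Real.sqrt (2 * Real.pi)

/-- Standard normal cumulative distribution function. -/
noncomputable def Phi (x : ℝ) : ℝ := ∫ t in Set.Iio x, phi t

/-- Mills-type ratio. -/
noncomputable def r (b : ℝ) : ℝ := phi b / Phi (-b)

/-- The deficit transformation `F`. -/
noncomputable def F (b : ℝ) : ℝ := phi b / Phi (-b) - b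

section Aux
open Set

lemma sqrt2pi_pos : 0 < Real.sqrt (2 * Real.pi) :=
  Real.sqrt_pos.mpr (by positivity)

lemma phi_pos (x : ℝ) : 0 < phi x := by
  unfold phi; positivity

lemma continuous_phi : Continuous phi := by
  unfold phi
  exact (Real.continuous_exp.comp (by continuity)).div_const _

lemma phi_eq (x : ℝ) : phi x = Real.exp (-(1/2) * x ^ 2) * (Real.sqrt (2 * Real.pi))⁻¹ := by
  unfold phi
  rw [div_eq_mul_inv]
  congr 2
  ring

lemma phi_neg (x : ℝ) : phi (-x) = phi x := by
  unfold phi; rw [neg_pow]; norm_num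

lemma integrable_phi : Integrable phi := by
  have h := integrable_exp_neg_mul_sq (by norm_num : (0:ℝ) < 1/2)
  have : phi = fun x => Real.exp (-(1/2) * x ^ 2) * (Real.sqrt (2 * Real.pi))⁻¹ :=
    funext phi_eq
  rw [this]
  exact h.mul_const _

lemma integral_phi : ∫ x, phi x = 1 := by
  have h := integral_gaussian (1/2 : ℝ)
  have : phi = fun x => Real.exp (-(1/2) * x ^ 2) * (Real.sqrt (2 * Real.pi))⁻¹ :=
    funext phi_eq
  rw [this, integral_mul_const, h]
  rw [show Real.pi / (1/2) = 2 * Real.pi by ring]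
  rw [mul_inv_cancel₀ (ne_of_gt sqrt2pi_pos)]

lemma Phi_eq_Iic (a : ℝ) : Phi a = ∫ t in Iic a, phi t := by
  unfold Phi
  exact setIntegral_congr_set Iio_ae_eq_Iic

lemma Phi_eq (x : ℝ) : Phi x = Phi 0 + ∫ t in (0:ℝ)..x, phi t := by
  have h := intervalIntegral.integral_Iic_sub_Iic
    (f := phi) (μ := volume) (a := 0) (b := x)
    integrable_phi.integrableOn integrable_phi.integrableOn
  rw [Phi_eq_Iic, Phi_eq_Iic]
  linarith [h]

lemma hasDerivAt_Phi (x : ℝ) : HasDerivAt Phi (phi x) x := by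
  have h : HasDerivAt (fun y => ∫ t in (0:ℝ)..y, phi t) (phi x) x :=
    intervalIntegral.integral_hasDerivAt_right (integrable_phi.intervalIntegrable)
      (continuous_phi.stronglyMeasurableAtFilter _ _)
      continuous_phi.continuousAt
  have hP : Phi = fun y => Phi 0 + ∫ t in (0:ℝ)..y, phi t := funext Phi_eq
  rw [hP]
  exact h.const_add (Phi 0)

lemma Phi_neg_eq (b : ℝ) : Phi (-b) = ∫ t in Ioi b, phi t := by
  rw [Phi_eq_Iic, ← integral_comp_neg_Ioi]
  simp only [phi_neg]

lemma Phi_neg_pos (b : ℝ) : 0 < Phi (-b) := by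
  rw [Phi_neg_eq]
  rw [setIntegral_pos_iff_support_of_nonneg_ae]
  · have hsub : Ioi b ⊆ Function.support phi ∩ Ioi b :=
      fun t ht => ⟨ne_of_gt (phi_pos t), ht⟩
    calc (0:ENNReal) < volume (Ioi b) := by simp [Real.volume_Ioi]
      _ ≤ volume (Function.support phi ∩ Ioi b) := measure_mono hsub
  · exact Eventually.of_forall fun t => (phi_pos t).le
  · exact integrable_phi.integrableOn

lemma hasDerivAt_phi (x : ℝ) : HasDerivAt phi (-x * phi x) x := by
  have h1 : HasDerivAt (fun y : ℝ => -y ^ 2 / 2) (-x) x := by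
    have := ((hasDerivAt_pow 2 x).neg).div_const 2
    simpa using this.congr_deriv (by ring)
  have h2 := (h1.exp).div_const (Real.sqrt (2 * Real.pi))
  have : phi = fun y => Real.exp (-y ^ 2 / 2) / Real.sqrt (2 * Real.pi) := rfl
  rw [this]
  exact h2.congr_deriv (by simp only [phi]; ring)

lemma tendsto_phi_atTop : Tendsto phi atTop (nhds 0) := by
  have h1 : Tendsto (fun x : ℝ => -x ^ 2 / 2) atTop atBot := by
    apply Tendsto.atBot_div_const (by norm_num)
    exact tendsto_neg_atBot_iff.mpr (tendsto_pow_atTop (by norm_num))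
  have h2 : Tendsto (fun x : ℝ => Real.exp (-x ^ 2 / 2)) atTop (nhds 0) :=
    Real.tendsto_exp_atBot.comp h1
  have : phi = fun x => Real.exp (-x ^ 2 / 2) / Real.sqrt (2 * Real.pi) := rfl
  rw [this]
  simpa using h2.div_const (Real.sqrt (2 * Real.pi))

lemma integrableOn_id_mul_phi (b : ℝ) : IntegrableOn (fun t => t * phi t) (Ioi b) := by
  have h := integrable_mul_exp_neg_mul_sq (by norm_num : (0:ℝ) < 1/2)
  have : (fun t : ℝ => t * phi t)
      = fun t => (t * Real.exp (-(1/2) * t ^ 2)) * (Real.sqrt (2 * Real.pi))⁻¹ := by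
    funext t; rw [phi_eq]; ring
  rw [this]
  exact (h.mul_const _).integrableOn

lemma integral_id_mul_phi (b : ℝ) : ∫ t in Ioi b, t * phi t = phi b := by
  have hderiv : ∀ x ∈ Ici b, HasDerivAt (fun t => -phi t) (x * phi x) x := by
    intro x _
    exact (hasDerivAt_phi x).neg.congr_deriv (by ring)
  have htend : Tendsto (fun t => -phi t) atTop (nhds 0) := by
    simpa using tendsto_phi_atTop.neg
  have h := integral_Ioi_of_hasDerivAt_of_tendsto' hderiv (integrableOn_id_mul_phi b) htend
  rw [h]; ring

lemma mills (b : ℝ) (hb : 0 < b) : b * Phi (-b) < phi b := by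
  have hint1 := integrableOn_id_mul_phi b
  have hint2 : IntegrableOn (fun t => b * phi t) (Ioi b) :=
    (integrable_phi.integrableOn).const_mul b
  have key : 0 < ∫ t in Ioi b, (t - b) * phi t := by
    rw [setIntegral_pos_iff_support_of_nonneg_ae]
    · have hsub : Ioi b ⊆ Function.support (fun t => (t - b) * phi t) ∩ Ioi b := by
        intro t ht
        refine ⟨?_, ht⟩
        have : 0 < (t - b) * phi t := mul_pos (by simpa using sub_pos.mpr (mem_Ioi.mp ht)) (phi_pos t)
        exact ne_of_gt this
      calc (0:ENNReal) < volume (Ioi b) := by simp [Real.volume_Ioi]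
        _ ≤ _ := measure_mono hsub
    · rw [EventuallyLE, ae_restrict_iff' measurableSet_Ioi]
      refine Eventually.of_forall fun t ht => ?_
      exact mul_nonneg (by simpa using (le_of_lt ht)) (phi_pos t).le
    · have e : (fun t : ℝ => (t - b) * phi t) = fun t => t * phi t - b * phi t := by
        funext t; ring
      rw [e]
      exact hint1.sub hint2
  have heq : ∫ t in Ioi b, (t - b) * phi t
      = (∫ t in Ioi b, t * phi t) - ∫ t in Ioi b, b * phi t := by
    have e : (fun t : ℝ => (t - b) * phi t) = fun t => t * phi t - b * phi t := by
      funext t; ring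
    rw [e]
    exact integral_sub hint1 hint2
  rw [heq, integral_id_mul_phi, integral_const_mul, ← Phi_neg_eq] at key
  linarith

lemma Phi_zero : Phi 0 = 1/2 := by
  have h1 : Phi 0 + Phi (-0) = 1 := by
    rw [Phi_eq_Iic, Phi_neg_eq, intervalIntegral.integral_Iic_add_Ioi integrable_phi.integrableOn
      integrable_phi.integrableOn, integral_phi]
  rw [neg_zero] at h1
  linarith

lemma phi_zero : phi 0 = (Real.sqrt (2 * Real.pi))⁻¹ := by
  unfold phi; norm_num

lemma continuous_Phi : Continuous Phi :=
  continuous_iff_continuousAt.mpr fun x => (hasDerivAt_Phi x).continuousAt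

lemma hasDerivAt_Phi_neg (b : ℝ) : HasDerivAt (fun b => Phi (-b)) (-phi b) b := by
  have h := (hasDerivAt_Phi (-b)).comp b (hasDerivAt_neg b)
  simp only [phi_neg, mul_neg, mul_one] at h
  exact h

noncomputable def mf (b : ℝ) : ℝ := Phi (-b) / phi b

lemma continuous_mf : Continuous mf :=
  (continuous_Phi.comp continuous_neg).div continuous_phi fun x => ne_of_gt (phi_pos x)

lemma hasDerivAt_mf (b : ℝ) : HasDerivAt mf (b * mf b - 1) b := by
  have hne : phi b ≠ 0 := ne_of_gt (phi_pos b)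
  have h := (hasDerivAt_Phi_neg b).div (hasDerivAt_phi b) hne
  refine (show HasDerivAt mf _ b from h).congr_deriv ?_
  symm
  have hm : mf b * phi b = Phi (-b) := div_mul_cancel₀ _ hne
  rw [eq_div_iff (pow_ne_zero 2 hne)]
  linear_combination (b * phi b) * hm

lemma mf_pos (b : ℝ) : 0 < mf b := div_pos (Phi_neg_pos b) (phi_pos b)

lemma mf_lt (b : ℝ) (hb : 0 < b) : mf b < 1 / b := by
  unfold mf
  rw [div_lt_div_iff₀ (phi_pos b) hb, mul_comm, one_mul]
  exact mills b hb

lemma mf_strictAnti : StrictAntiOn mf (Ici 0) := by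
  apply strictAntiOn_of_deriv_neg (convex_Ici 0) continuous_mf.continuousOn
  intro x hx
  rw [interior_Ici] at hx
  rw [(hasDerivAt_mf x).deriv]
  have h := mf_lt x hx
  have : x * mf x < 1 := by
    rw [lt_div_iff₀ hx] at h
    linarith [h]
  linarith

noncomputable def Gf (E b : ℝ) : ℝ := phi b - (E + b) * Phi (-b)

lemma continuous_Gf (E : ℝ) : Continuous (Gf E) := by
  unfold Gf
  exact continuous_phi.sub ((continuous_const.add continuous_id).mul
    (continuous_Phi.comp continuous_neg))

lemma hasDerivAt_Gf (E b : ℝ) : HasDerivAt (Gf E) (phi b * (E - mf b)) b := by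
  have h1 : HasDerivAt (fun b : ℝ => (E + b) * Phi (-b))
      ((0 + 1) * Phi (-b) + (E + b) * (-phi b)) b :=
    ((hasDerivAt_const b E).add (hasDerivAt_id b)).mul (hasDerivAt_Phi_neg b)
  have hne : phi b ≠ 0 := ne_of_gt (phi_pos b)
  have h := (hasDerivAt_phi b).sub h1
  refine (show HasDerivAt (Gf E) _ b from h).congr_deriv ?_
  symm
  have hm : mf b * phi b = Phi (-b) := div_mul_cancel₀ _ hne
  linear_combination -hm

lemma tendsto_Phi_neg : Tendsto (fun b => Phi (-b)) atTop (nhds 0) := by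
  apply squeeze_zero' (Eventually.of_forall fun b => (Phi_neg_pos b).le)
    ?_ tendsto_phi_atTop
  filter_upwards [eventually_ge_atTop (1:ℝ)] with b hb
  have h := mills b (by linarith)
  nlinarith [Phi_neg_pos b]

lemma tendsto_mul_Phi_neg : Tendsto (fun b => b * Phi (-b)) atTop (nhds 0) := by
  apply squeeze_zero' ?_ ?_ tendsto_phi_atTop
  · filter_upwards [eventually_ge_atTop (0:ℝ)] with b hb
    exact mul_nonneg hb (Phi_neg_pos b).le
  · filter_upwards [eventually_ge_atTop (1:ℝ)] with b hb
    exact (mills b (by linarith)).le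

lemma tendsto_Gf (E : ℝ) : Tendsto (Gf E) atTop (nhds 0) := by
  have h := tendsto_phi_atTop.sub ((tendsto_Phi_neg.const_mul E).add tendsto_mul_Phi_neg)
  simp only [mul_zero, add_zero, sub_zero] at h
  apply h.congr
  intro b
  unfold Gf
  ring


end Aux

open Set in
/-- For every `E*` with `0 < E* < 2/√(2π)`, there is a unique `β_S > 0`
with `F(β_S) = E*`. -/
theorem severity_index_exists_unique (E : ℝ) (hE0 : 0 < E)
    (hE1 : E < 2 / Real.sqrt (2 * Real.pi)) :
    ∃! b : ℝ, 0 < b ∧ F b = E := by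
  have hs2p := sqrt2pi_pos
  have hsq : Real.sqrt (2 * Real.pi) ^ 2 = 2 * Real.pi := Real.sq_sqrt (by positivity)
  have h2 : E * Real.sqrt (2 * Real.pi) < 2 := (lt_div_iff₀ hs2p).mp hE1
  -- G positive at 0
  have hG0 : 0 < Gf E 0 := by
    unfold Gf
    rw [neg_zero, Phi_zero, phi_zero]
    have h3 : E / 2 < 1 / Real.sqrt (2 * Real.pi) := by
      rw [div_lt_div_iff₀ (by norm_num) hs2p]
      linarith
    rw [inv_eq_one_div]
    linarith
  -- E below mf 0
  have hm0 : E < mf 0 := by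
    have : mf 0 = 1 / 2 * Real.sqrt (2 * Real.pi) := by
      unfold mf
      rw [neg_zero, Phi_zero, phi_zero]
      field_simp
    rw [this]
    nlinarith [Real.pi_gt_three, hs2p]
  -- E above mf B for large B
  set B : ℝ := 1 / E + 1 with hB
  have hB0 : 0 < B := by positivity
  have hmB : mf B < E := by
    have hEB : E * B = 1 + E := by
      rw [hB]; field_simp
    refine lt_trans (mf_lt B hB0) ?_
    rw [div_lt_iff₀ hB0]
    nlinarith
  -- find c with mf c = E
  have hBmem : E ∈ Icc (mf B) (mf 0) := ⟨hmB.le, hm0.le⟩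
  obtain ⟨c, hcmem, hc⟩ :=
    intermediate_value_Icc' hB0.le continuous_mf.continuousOn hBmem
  have hc0 : 0 < c := by
    rcases lt_or_eq_of_le hcmem.1 with h | h
    · exact h
    · exfalso; rw [← h] at hc; rw [hc] at hm0; exact lt_irrefl E hm0
  -- G strictly decreasing on [0, c]
  have hanti : StrictAntiOn (Gf E) (Icc 0 c) := by
    apply strictAntiOn_of_deriv_neg (convex_Icc 0 c) (continuous_Gf E).continuousOn
    intro x hx
    rw [interior_Icc] at hx
    rw [(hasDerivAt_Gf E x).deriv]
    have hlt : mf c < mf x := mf_strictAnti hx.1.le (hc0.le.trans (le_refl c)) hx.2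
    rw [hc] at hlt
    exact mul_neg_of_pos_of_neg (phi_pos x) (by linarith)
  -- G strictly increasing on [c, ∞)
  have hmono : StrictMonoOn (Gf E) (Ici c) := by
    apply strictMonoOn_of_deriv_pos (convex_Ici c) (continuous_Gf E).continuousOn
    intro x hx
    rw [interior_Ici] at hx
    rw [(hasDerivAt_Gf E x).deriv]
    have hlt : mf x < mf c := mf_strictAnti hc0.le (hc0.le.trans hx.le) hx
    rw [hc] at hlt
    exact mul_pos (phi_pos x) (by linarith)
  -- G negative on [c, ∞)
  have hGneg : ∀ b, c ≤ b → Gf E b < 0 := by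
    intro b hb
    have h1 : Gf E b < Gf E (b + 1) :=
      hmono hb (hb.trans (by linarith)) (lt_add_one b)
    have h2 : Gf E (b + 1) ≤ 0 := by
      refine ge_of_tendsto (tendsto_Gf E) ?_
      filter_upwards [eventually_ge_atTop (b + 1)] with x hx
      exact hmono.monotoneOn (hb.trans (by linarith)) ((hb.trans (by linarith)).trans hx) hx
    linarith
  have hGc : Gf E c < 0 := hGneg c le_rfl
  -- existence of a zero
  have h0mem : (0 : ℝ) ∈ Icc (Gf E c) (Gf E 0) := ⟨hGc.le, hG0.le⟩
  obtain ⟨b0, hb0mem, hb0⟩ :=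
    intermediate_value_Icc' hc0.le (continuous_Gf E).continuousOn h0mem
  have hb0pos : 0 < b0 := by
    rcases lt_or_eq_of_le hb0mem.1 with h | h
    · exact h
    · exfalso; rw [← h] at hb0; rw [hb0] at hG0; exact lt_irrefl 0 hG0
  -- F b = E ↔ Gf E b = 0
  have key : ∀ b : ℝ, F b = E ↔ Gf E b = 0 := by
    intro b
    have hP := Phi_neg_pos b
    unfold F Gf
    rw [sub_eq_iff_eq_add, div_eq_iff (ne_of_gt hP), sub_eq_zero]
  refine ⟨b0, ⟨hb0pos, (key b0).mpr hb0⟩, ?_⟩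
  rintro y ⟨hy0, hyF⟩
  have hGy : Gf E y = 0 := (key y).mp hyF
  have hyc : y ≤ c := by
    by_contra h
    push_neg at h
    exact absurd hGy (ne_of_lt (hGneg y h.le))
  exact hanti.injOn ⟨hy0.le, hyc⟩ ⟨hb0mem.1, hb0mem.2⟩ (hGy.trans hb0.symm)
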